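/- Let C be a braided monoidal category with braiding β equipped with a twist, i.e. a family of isomorphisms θ_a : a ≅ a, natural in a (f ≫ θ_b = θ_a ≫ f for all f : a ⟶ b), satisfying the balance law θ_{a⊗b} = (θ_a ⊗ θ_b) ≫ β_{a,b} ≫ β_{b,a} for all a, b. Let (A, μ, η) be a monoid object of C. Then θ_A : A ⟶ A is an isomorphism of monoid objects from the (−)-opposite algebra (A, (β_{A,A})⁻¹ ≫ μ, η) to the (+)-opposite algebra (A, β_{A,A} ≫ μ, η); explicitly, η ≫ θ_A = η and (β_{A,A})⁻¹ ≫ μ ≫ θ_A = (θ_A ⊗ θ_A) ≫ β_{A,A} ≫ μ. -/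

import Mathlib

open CategoryTheory MonoidalCategory

/-- In a balanced braided category (a braided category with a natural twist `θ` satisfying
the balance law), for every monoid object `(A, μ, η)` the twist `θ_A` is an isomorphism of
monoid objects from the `(−)`-opposite algebra `(A, β⁻¹ ≫ μ, η)` to the `(+)`-opposite
algebra `(A, β ≫ μ, η)`: explicitly, `η ≫ θ_A = η` and
`β⁻¹ ≫ μ ≫ θ_A = (θ_A ⊗ θ_A) ≫ β ≫ μ`. -/
theorem twist_monHom_negOp_posOp
    {C : Type*} [Category C] [MonoidalCategory C] [BraidedCategory C]
    (θ : ∀ a : C, a ≅ a)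
    (θ_natural : ∀ {a b : C} (f : a ⟶ b), f ≫ (θ b).hom = (θ a).hom ≫ f)
    (θ_balance : ∀ a b : C,
      (θ (a ⊗ b)).hom = ((θ a).hom ⊗ₘ (θ b).hom) ≫ (β_ a b).hom ≫ (β_ b a).hom)
    (A : Mon C) :
    A.mon.one ≫ (θ A.X).hom = A.mon.one ∧
    (β_ A.X A.X).inv ≫ A.mon.mul ≫ (θ A.X).hom =
      ((θ A.X).hom ⊗ₘ (θ A.X).hom) ≫ (β_ A.X A.X).hom ≫ A.mon.mul := by
  have hunit : (θ (𝟙_ C)).hom = 𝟙 _ := by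
    have h := θ_natural (λ_ (𝟙_ C)).hom
    rw [θ_balance, Category.assoc, Category.assoc, braiding_leftUnitor, braiding_rightUnitor,
      MonoidalCategory.tensorHom_def, Category.assoc, leftUnitor_naturality, unitors_equal,
      rightUnitor_naturality_assoc, ← unitors_equal, ← Category.assoc] at h
    have h2 : (θ (𝟙_ C)).hom = (θ (𝟙_ C)).hom ≫ (θ (𝟙_ C)).hom :=
      (Iso.cancel_iso_hom_left (λ_ (𝟙_ C)) _ _).mp (by simpa using h)
    have := congrArg (· ≫ (θ (𝟙_ C)).inv) h2
    simpa using this.symm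
  constructor
  · rw [θ_natural A.mon.one, hunit, Category.id_comp]
  · have h := θ_natural A.mon.mul
    rw [θ_balance] at h
    rw [h]
    have hb : ((θ A.X).hom ⊗ₘ (θ A.X).hom) ≫ (β_ A.X A.X).hom =
        (β_ A.X A.X).hom ≫ ((θ A.X).hom ⊗ₘ (θ A.X).hom) :=
      BraidedCategory.braiding_naturality _ _
    rw [reassoc_of% hb]
    simp
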